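/- If the CGM M is finite (finitely many states and finitely many available global moves at each state) and an assertion s ⊢ ⟨⟨A⟩⟩(φ₁ U φ₂) is true, then there exist an A-strategy F and a natural number bound N such that along every play from s compliant with F, the eventuality φ₂ is realized at some position k ≤ N while φ₁ holds at all earlier positions. -/
import Mathlib


/-- A concurrent game model. -/
structure CGM (Agent State : Type) where
  Act : Type
  avail : Agent → State → Set Act
  avail_ne : ∀ a s, (avail a s).Nonempty
  out : State → (Agent → Act) → State

namespace CGM
variable {Agent State : Type} (M : CGM Agent State)

/-- A global move available at `s`. -/
def GlobalAvail (s : State) (σ : Agent → M.Act) : Prop := ∀ a, σ a ∈ M.avail a s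

/-- A play: an infinite sequence of states following transitions. -/
def IsPlay (lam : ℕ → State) : Prop :=
  ∀ i, ∃ σ, M.GlobalAvail (lam i) σ ∧ M.out (lam i) σ = lam (i + 1)

/-- The history `λ₀ … λᵢ` of a play. -/
def hist (lam : ℕ → State) (i : ℕ) : List State := (List.range (i + 1)).map lam

/-- A perfect-recall strategy for coalition `A` prescribes available moves. -/
def StratAvail (A : Set Agent) (F : List State → Agent → M.Act) : Prop :=
  ∀ (h : List State) (s : State), h.getLast? = some s → ∀ a ∈ A, F h a ∈ M.avail a s

/-- A play is compliant with the `A`-strategy `F`. -/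
def Compliant (A : Set Agent) (F : List State → Agent → M.Act) (lam : ℕ → State) : Prop :=
  ∀ i, ∃ σ, M.GlobalAvail (lam i) σ ∧ (∀ a ∈ A, σ a = F (CGM.hist lam i) a) ∧
    M.out (lam i) σ = lam (i + 1)

/-- `M,s ⊨ ⟨⟨A⟩⟩Φ` : some perfect-recall `A`-strategy makes every compliant
play from `s` satisfy the path property `Φ`. -/
def satCoal (A : Set Agent) (s : State) (Φ : (ℕ → State) → Prop) : Prop :=
  ∃ F, M.StratAvail A F ∧
    ∀ lam : ℕ → State, lam 0 = s → M.IsPlay lam → M.Compliant A F lam → Φ lam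

end CGM

/-- ATL* formulae (state and path formulae together); `coal` is `⟨⟨A⟩⟩`,
`dcoal` is `[[A]]`, `untl` is the until operator. -/
inductive Form (Agent : Type) where
  | top : Form Agent
  | atom : ℕ → Form Agent
  | neg : Form Agent → Form Agent
  | and : Form Agent → Form Agent → Form Agent
  | or : Form Agent → Form Agent → Form Agent
  | coal : Set Agent → Form Agent → Form Agent
  | dcoal : Set Agent → Form Agent → Form Agent
  | next : Form Agent → Form Agent
  | box : Form Agent → Form Agent
  | untl : Form Agent → Form Agent → Form Agent

namespace Form
variable {Agent State : Type}

mutual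
/-- ATL⁺ state formulae. -/
def isState : Form Agent → Bool
  | .top => true
  | .atom _ => true
  | .neg φ => isState φ
  | .and φ ψ => isState φ && isState ψ
  | .or φ ψ => isState φ && isState ψ
  | .coal _ Φ => isPathPlus Φ
  | .dcoal _ Φ => isPathPlus Φ
  | _ => false

/-- ATL⁺ path formulae: boolean combinations of state formulae and of
`◯φ`, `□φ`, `φ U ψ` with `φ, ψ` state formulae. -/
def isPathPlus : Form Agent → Bool
  | .top => true
  | .atom _ => true
  | .coal _A Φ => isPathPlus Φ
  | .dcoal _A Φ => isPathPlus Φ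
  | .neg Φ => isPathPlus Φ
  | .and Φ Ψ => isPathPlus Φ && isPathPlus Ψ
  | .or Φ Ψ => isPathPlus Φ && isPathPlus Ψ
  | .next φ => isState φ
  | .box φ => isState φ
  | .untl φ ψ => isState φ && isState ψ
end

/-- Path satisfaction `M,λ ⊨ Φ` (state formulae are read at `λ 0`). -/
def psat (M : CGM Agent State) (V : ℕ → State → Prop) : Form Agent → (ℕ → State) → Prop
  | .top, _ => True
  | .atom n, lam => V n (lam 0)
  | .neg φ, lam => ¬ psat M V φ lam
  | .and φ ψ, lam => psat M V φ lam ∧ psat M V ψ lam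
  | .or φ ψ, lam => psat M V φ lam ∨ psat M V ψ lam
  | .coal A Φ, lam => M.satCoal A (lam 0) (fun lam' => psat M V Φ lam')
  | .dcoal A Φ, lam => M.satCoal Aᶜ (lam 0) (fun lam' => psat M V Φ lam')
  | .next φ, lam => psat M V φ (fun j => lam (j + 1))
  | .box φ, lam => ∀ i, psat M V φ (fun j => lam (i + j))
  | .untl φ ψ, lam => ∃ i, psat M V ψ (fun j => lam (i + j)) ∧
      ∀ k < i, psat M V φ (fun j => lam (k + j))

/-- State satisfaction `M,s ⊨ φ` for state formulae. -/
def SSat (M : CGM Agent State) (V : ℕ → State → Prop) (φ : Form Agent) (s : State) : Prop :=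
  psat M V φ (fun _ => s)

/-- Number of symbols of a formula. -/
def size : Form Agent → ℕ
  | .top => 1
  | .atom _ => 1
  | .neg φ => size φ + 1
  | .and φ ψ => size φ + size ψ + 1
  | .or φ ψ => size φ + size ψ + 1
  | .untl φ ψ => size φ + size ψ + 1
  | .coal _ Φ => size Φ + 1
  | .dcoal _ Φ => size Φ + 1
  | .next Φ => size Φ + 1
  | .box Φ => size Φ + 1

def isTop : Form Agent → Bool
  | .top => true
  | _ => false

end Form

open Form

/-- The `⊗` operation on sets (lists) of pairs of formulae. -/
def otimes {Agent : Type} (l₁ l₂ : List (Form Agent × Form Agent)) :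
    List (Form Agent × Form Agent) :=
  l₁.flatMap fun p => l₂.map fun q => (p.1.and q.1, p.2.and q.2)

/-- The `⊕` operation on sets (lists) of pairs of formulae. -/
def oplus {Agent : Type} (l₁ l₂ : List (Form Agent × Form Agent)) :
    List (Form Agent × Form Agent) :=
  (l₁.filter fun p => !p.2.isTop).flatMap fun p =>
    (l₂.filter fun q => !q.2.isTop).map fun q => (p.1.and q.1, p.2.or q.2)

/-- The decomposition function `dec` on ATL⁺ path formulae. -/
def dec {Agent : Type} : Form Agent → List (Form Agent × Form Agent)
  | .next φ => [(.top, φ)]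
  | .box φ => [(φ, .box φ)]
  | .untl φ ψ => [(φ, .untl φ ψ), (ψ, .top)]
  | .and Φ₁ Φ₂ => otimes (dec Φ₁) (dec Φ₂)
  | .or Φ₁ Φ₂ => dec Φ₁ ++ dec Φ₂ ++ oplus (dec Φ₁) (dec Φ₂)
  | φ => [(φ, .top)]

/-- The γ-component of a pair `(ψ,Ψ)` for `⟨⟨A⟩⟩`. -/
def gcomp {Agent : Type} (A : Set Agent) (p : Form Agent × Form Agent) : Form Agent :=
  if p.2.isTop then p.1 else p.1.and (.coal A (.next (.coal A p.2)))

/-- The γ-component of a pair `(ψ,Ψ)` for `[[A]]`. -/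
def gcompU {Agent : Type} (A : Set Agent) (p : Form Agent × Form Agent) : Form Agent :=
  if p.2.isTop then p.1 else p.1.and (.dcoal A (.next (.dcoal A p.2)))

/-- Conjunctive normal form: a list of clauses (lists of "literals"). -/
def cnf {Agent : Type} : Form Agent → List (List (Form Agent))
  | .and φ ψ => cnf φ ++ cnf ψ
  | .or φ ψ => (cnf φ).flatMap fun c => (cnf ψ).map fun d => c ++ d
  | φ => [[φ]]

/-- Disjunction of a list of formulae. -/
def bigOr {Agent : Type} : List (Form Agent) → Form Agent
  | [] => .neg .top
  | a :: l => l.foldl .or a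

/-- γ_d-components of `⟨⟨A⟩⟩Φ` : the conjuncts (clauses) of the CNF of the
disjunction of the γ-components. -/
def gammaD {Agent : Type} (A : Set Agent) (Φ : Form Agent) : List (Form Agent) :=
  (cnf (bigOr ((dec Φ).map (gcomp A)))).map bigOr

/-- γ_d-components of `[[A]]Φ`. -/
def gammaDU {Agent : Type} (A : Set Agent) (Φ : Form Agent) : List (Form Agent) :=
  (cnf (bigOr ((dec Φ).map (gcompU A)))).map bigOr

/-- The component relation: successor, α, β and γ_d components. -/
inductive Component {Agent : Type} : Form Agent → Form Agent → Prop
  | andL (φ ψ : Form Agent) : Component (.and φ ψ) φ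
  | andR (φ ψ : Form Agent) : Component (.and φ ψ) ψ
  | orL (φ ψ : Form Agent) : Component (.or φ ψ) φ
  | orR (φ ψ : Form Agent) : Component (.or φ ψ) ψ
  | succE (A : Set Agent) (φ : Form Agent) : Component (.coal A (.next φ)) φ
  | succU (A : Set Agent) (φ : Form Agent) : Component (.dcoal A (.next φ)) φ
  | gammaE (A : Set Agent) (Φ δ : Form Agent) :
      δ ∈ gammaD A Φ → Component (.coal A Φ) δ
  | gammaU (A : Set Agent) (Φ δ : Form Agent) :
      δ ∈ gammaDU A Φ → Component (.dcoal A Φ) δ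

/-- Membership in the closure `cl φ` : least set containing `⊤` and `φ`
closed under taking components. -/
inductive InCl {Agent : Type} (φ : Form Agent) : Form Agent → Prop
  | base : InCl φ φ
  | top : InCl φ .top
  | step {ψ χ : Form Agent} : InCl φ ψ → Component ψ χ → InCl φ χ


section AuxForProof

/-- A state formula is evaluated only at the first state of the play. -/
theorem psat_state_only {Agent State : Type} (M : CGM Agent State) (V : ℕ → State → Prop) :
    ∀ φ : Form Agent, φ.isState = true → ∀ lam : ℕ → State,
      Form.psat M V φ lam ↔ Form.SSat M V φ (lam 0) := by
  intro φ
  induction φ with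
  | top => intro _ lam; simp [Form.psat, Form.SSat]
  | atom n => intro _ lam; simp [Form.psat, Form.SSat]
  | neg φ ih =>
      intro h lam
      simp only [Form.isState] at h
      simp only [Form.psat, Form.SSat]
      exact not_congr (ih h lam)
  | and φ ψ ihφ ihψ =>
      intro h lam
      simp only [Form.isState, Bool.and_eq_true] at h
      simp only [Form.psat, Form.SSat]
      exact and_congr (ihφ h.1 lam) (ihψ h.2 lam)
  | or φ ψ ihφ ihψ =>
      intro h lam
      simp only [Form.isState, Bool.and_eq_true] at h
      simp only [Form.psat, Form.SSat]
      exact or_congr (ihφ h.1 lam) (ihψ h.2 lam)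
  | coal A Φ ih => intro _ lam; simp only [Form.psat, Form.SSat]
  | dcoal A Φ ih => intro _ lam; simp only [Form.psat, Form.SSat]
  | next φ ih => intro h; simp [Form.isState] at h
  | box φ ih => intro h; simp [Form.isState] at h
  | untl φ ψ ihφ ihψ => intro h; simp [Form.isState] at h

/-- A set of sequences determined by finitely many coordinates is closed
(discrete topology on a finite type). -/
theorem closed_findep {X : Type} [Finite X] [TopologicalSpace X] [DiscreteTopology X]
    (m : ℕ) (P : (Fin m → X) → Prop) :
    IsClosed {f : ℕ → X | P (fun j : Fin m => f (j : ℕ))} := by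
  have hc : Continuous (fun f : ℕ → X => fun j : Fin m => f (j : ℕ)) :=
    continuous_pi fun j => continuous_apply _
  exact (isClosed_discrete {g : Fin m → X | P g}).preimage hc

theorem hist_eq_ofFn {State : Type} (lam : ℕ → State) (i : ℕ) :
    CGM.hist lam i = List.ofFn (fun j : Fin (i + 1) => lam (j : ℕ)) := by
  apply List.ext_getElem <;>
    simp only [CGM.hist, List.length_map, List.length_range, List.length_ofFn,
      List.getElem_map, List.getElem_range, List.getElem_ofFn, implies_true]

end AuxForProof

/-- in a finite CGM (finitely many states, finitely many available
global moves at each state), if `s ⊢ ⟨⟨A⟩⟩(φ₁ U φ₂)` is true then some `A`-strategy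
`F` realizes the eventuality `φ₂` within a uniform bound `N` along every compliant
play from `s`, with `φ₁` holding at all earlier positions. -/
theorem until_uniform_bound {Agent State : Type} [Finite State]
    (M : CGM Agent State)
    (hfb : ∀ s : State, {σ : Agent → M.Act | M.GlobalAvail s σ}.Finite)
    (V : ℕ → State → Prop) (A : Set Agent) (φ₁ φ₂ : Form Agent)
    (h1 : φ₁.isState = true) (h2 : φ₂.isState = true) (s : State)
    (h : Form.SSat M V (.coal A (.untl φ₁ φ₂)) s) :
    ∃ (F : List State → Agent → M.Act) (N : ℕ), M.StratAvail A F ∧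
      ∀ lam : ℕ → State, lam 0 = s → M.IsPlay lam → M.Compliant A F lam →
        ∃ k ≤ N, Form.SSat M V φ₂ (lam k) ∧ ∀ j < k, Form.SSat M V φ₁ (lam j) := by
  classical
  have h' : M.satCoal A s (fun lam' => Form.psat M V (.untl φ₁ φ₂) lam') := h
  obtain ⟨F, hF, hplay⟩ := h'
  suffices hs : ∃ N : ℕ, ∀ lam : ℕ → State, lam 0 = s → M.IsPlay lam → M.Compliant A F lam →
      ∃ k ≤ N, Form.SSat M V φ₂ (lam k) ∧ ∀ j < k, Form.SSat M V φ₁ (lam j) by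
    obtain ⟨N, hN⟩ := hs; exact ⟨F, N, hF, hN⟩
  by_contra hcon
  push_neg at hcon
  letI : TopologicalSpace State := ⊥
  haveI : DiscreteTopology State := ⟨rfl⟩
  set Bad : ℕ → Set (ℕ → State) := fun n =>
    {lam | lam 0 = s ∧ M.IsPlay lam ∧ M.Compliant A F lam ∧
      ∀ k ≤ n, ¬(Form.SSat M V φ₂ (lam k) ∧ ∀ j < k, Form.SSat M V φ₁ (lam j))} with hBad
  have hanti : ∀ n, Bad (n + 1) ⊆ Bad n := by
    intro n lam hm
    exact ⟨hm.1, hm.2.1, hm.2.2.1, fun k hk => hm.2.2.2 k (le_trans hk (Nat.le_succ n))⟩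
  have hne : ∀ n, (Bad n).Nonempty := by
    intro n
    obtain ⟨lam, h0, hp, hc, hlast⟩ := hcon n
    refine ⟨lam, h0, hp, hc, fun k hk hcontra => ?_⟩
    obtain ⟨j, hj, hnj⟩ := hlast k hk hcontra.1
    exact hnj (hcontra.2 j hj)
  have hclosed : ∀ n, IsClosed (Bad n) := by
    intro n
    have h0 : IsClosed {lam : ℕ → State | lam 0 = s} :=
      closed_findep 1 (fun g : Fin 1 → State => g 0 = s)
    have hplayc : IsClosed {lam : ℕ → State | M.IsPlay lam} := by
      have heq : {lam : ℕ → State | M.IsPlay lam} =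
          ⋂ i, {lam : ℕ → State |
            ∃ σ, M.GlobalAvail (lam i) σ ∧ M.out (lam i) σ = lam (i + 1)} := by
        ext lam; simp [CGM.IsPlay, Set.mem_iInter]
      rw [heq]
      refine isClosed_iInter fun i => ?_
      exact closed_findep (i + 2) (fun g : Fin (i + 2) → State =>
        ∃ σ, M.GlobalAvail (g ⟨i, by omega⟩) σ ∧ M.out (g ⟨i, by omega⟩) σ = g ⟨i + 1, by omega⟩)
    have hcompc : IsClosed {lam : ℕ → State | M.Compliant A F lam} := by
      have heq : {lam : ℕ → State | M.Compliant A F lam} =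
          ⋂ i, {lam : ℕ → State |
            ∃ σ, M.GlobalAvail (lam i) σ ∧
              (∀ a ∈ A, σ a = F (List.ofFn (fun j : Fin (i + 1) => lam (j : ℕ))) a) ∧
              M.out (lam i) σ = lam (i + 1)} := by
        ext lam
        simp only [CGM.Compliant, Set.mem_setOf_eq, Set.mem_iInter, hist_eq_ofFn]
      rw [heq]
      refine isClosed_iInter fun i => ?_
      have hcf := closed_findep (i + 2) (fun g : Fin (i + 2) → State =>
        ∃ σ, M.GlobalAvail (g ⟨i, by omega⟩) σ ∧
          (∀ a ∈ A, σ a = F (List.ofFn (fun j : Fin (i + 1) => g ⟨(j : ℕ), by omega⟩)) a) ∧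
          M.out (g ⟨i, by omega⟩) σ = g ⟨i + 1, by omega⟩)
      convert hcf using 2
    have hfailc : IsClosed {lam : ℕ → State |
        ∀ k ≤ n, ¬(Form.SSat M V φ₂ (lam k) ∧ ∀ j < k, Form.SSat M V φ₁ (lam j))} := by
      have hcf := closed_findep (n + 1) (fun g : Fin (n + 1) → State =>
        ∀ k : ℕ, (hk : k ≤ n) → ¬(Form.SSat M V φ₂ (g ⟨k, Nat.lt_succ_of_le hk⟩) ∧
          ∀ j : ℕ, (hj : j < k) →
            Form.SSat M V φ₁ (g ⟨j, Nat.lt_succ_of_le (le_of_lt (lt_of_lt_of_le hj hk))⟩)))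
      convert hcf using 2
    have heq : Bad n = ({lam : ℕ → State | lam 0 = s} ∩ {lam | M.IsPlay lam} ∩
        {lam | M.Compliant A F lam} ∩ {lam | ∀ k ≤ n,
          ¬(Form.SSat M V φ₂ (lam k) ∧ ∀ j < k, Form.SSat M V φ₁ (lam j))}) := by
      ext lam
      simp [hBad, Set.mem_inter_iff, and_assoc]
    rw [heq]
    exact ((h0.inter hplayc).inter hcompc).inter hfailc
  have hint := IsCompact.nonempty_iInter_of_sequence_nonempty_isCompact_isClosed Bad
    hanti hne ((hclosed 0).isCompact) hclosed
  obtain ⟨lam, hlam⟩ := hint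
  simp only [Set.mem_iInter] at hlam
  obtain ⟨h0, hp, hc, _⟩ := hlam 0
  have hu := hplay lam h0 hp hc
  simp only [Form.psat] at hu
  obtain ⟨i, hu2, hu1⟩ := hu
  refine (hlam i).2.2.2 i le_rfl ⟨?_, ?_⟩
  · exact (psat_state_only M V φ₂ h2 (fun j => lam (i + j))).mp hu2
  · intro j hj
    exact (psat_state_only M V φ₁ h1 (fun j' => lam (j + j'))).mp (hu1 j hj)
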